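/- Let Γ_pr = L_pr L_prᵀ, Γ_obs positive definite, G, Ĝ ∈ ℝ^{d_obs×d}, μ_pr ∈ range(L_pr), and m ∈ ℝ^{d_obs}. Define Γ_pos, Γ̂_pos as the posterior covariances for G and Ĝ respectively, and the posterior means μ_pos(m) = μ_pr + Γ_pos Gᵀ Γ_obs⁻¹(m − G μ_pr) and μ̂_pos(m) = μ_pr + Γ̂_pos Ĝᵀ Γ_obs⁻¹(m − Ĝ μ_pr). Then ‖μ_pos(m) − μ̂_pos(m)‖₂ ≤ C′ ‖Γ_obs^{-1/2}(G − Ĝ) L_pr‖_F, where C′ = C ‖Gᵀ Γ_obs⁻¹(m − G μ_pr)‖₂ + ‖Γ̂_pos Gᵀ Γ_obs^{-1/2}‖ · ‖L_pr† μ_pr‖₂ + ‖Γ̂_pos (L_pr†)ᵀ‖ · ‖Γ_obs^{-1/2}(m − Ĝ μ_pr)‖₂, and C is the Lipschitz constant from the covariance bound ‖Γ_pos − Γ̂_pos‖ ≤ C ‖Γ_obs^{-1/2}(G − Ĝ)L_pr‖. -/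

import Mathlib

open Matrix

/-- Frobenius norm of a real matrix. -/
noncomputable def frob {m n : ℕ} (M : Matrix (Fin m) (Fin n) ℝ) : ℝ :=
  Real.sqrt (∑ i, ∑ j, (M i j) ^ 2)

/-- Spectral (operator) norm of a real matrix. -/
noncomputable def spec {m n : ℕ} (M : Matrix (Fin m) (Fin n) ℝ) : ℝ :=
  ‖LinearMap.toContinuousLinearMap (Matrix.toEuclideanLin M)‖

/-- Euclidean norm of a real vector. -/
noncomputable def enorm' {m : ℕ} (v : Fin m → ℝ) : ℝ :=
  Real.sqrt (∑ i, (v i) ^ 2)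

/-- Square root of a positive semidefinite matrix (the former `Matrix.PosSemidef.sqrt`). -/
noncomputable def psdSqrt {n : ℕ} {A : Matrix (Fin n) (Fin n) ℝ} (hA : A.PosSemidef) :
    Matrix (Fin n) (Fin n) ℝ :=
  hA.1.eigenvectorUnitary.1 * diagonal ((↑) ∘ (√·) ∘ hA.1.eigenvalues) *
    (star hA.1.eigenvectorUnitary : Matrix (Fin n) (Fin n) ℝ)

lemma psdSqrt_mul_self {n : ℕ} {A : Matrix (Fin n) (Fin n) ℝ} (hA : A.PosSemidef) :
    psdSqrt hA * psdSqrt hA = A := by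
  have hU : (star hA.1.eigenvectorUnitary : Matrix (Fin n) (Fin n) ℝ) *
      (hA.1.eigenvectorUnitary : Matrix (Fin n) (Fin n) ℝ) = 1 := Unitary.coe_star_mul_self _
  have hD : diagonal ((↑) ∘ (√·) ∘ hA.1.eigenvalues) * diagonal ((↑) ∘ (√·) ∘ hA.1.eigenvalues)
      = diagonal ((RCLike.ofReal : ℝ → ℝ) ∘ hA.1.eigenvalues) := by
    rw [diagonal_mul_diagonal]; congr 1; funext i
    simp [Real.mul_self_sqrt (hA.eigenvalues_nonneg i)]
  conv_rhs => rw [hA.1.spectral_theorem, Unitary.conjStarAlgAut_apply]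
  unfold psdSqrt
  calc _ = (hA.1.eigenvectorUnitary : Matrix (Fin n) (Fin n) ℝ) *
        (diagonal ((↑) ∘ (√·) ∘ hA.1.eigenvalues) *
          ((star hA.1.eigenvectorUnitary : Matrix (Fin n) (Fin n) ℝ) *
            (hA.1.eigenvectorUnitary : Matrix (Fin n) (Fin n) ℝ)) *
          diagonal ((↑) ∘ (√·) ∘ hA.1.eigenvalues)) *
        (star hA.1.eigenvectorUnitary : Matrix (Fin n) (Fin n) ℝ) := by
        simp only [Matrix.mul_assoc]
    _ = _ := by rw [hU, Matrix.mul_one, hD]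

lemma psdSqrt_transpose {n : ℕ} {A : Matrix (Fin n) (Fin n) ℝ} (hA : A.PosSemidef) :
    (psdSqrt hA)ᵀ = psdSqrt hA := by
  unfold psdSqrt
  rw [transpose_mul, transpose_mul, diagonal_transpose,
    star_eq_conjTranspose, conjTranspose_eq_transpose_of_trivial, transpose_transpose,
    Matrix.mul_assoc]

section Aux

open scoped Matrix.Norms.L2Operator

lemma spec_eq_norm {a b : ℕ} (M : Matrix (Fin a) (Fin b) ℝ) : spec M = ‖M‖ := rfl

lemma enorm_eq_norm {a : ℕ} (v : Fin a → ℝ) :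
    enorm' v = ‖(WithLp.equiv 2 (Fin a → ℝ)).symm v‖ := by
  rw [EuclideanSpace.norm_eq]
  simp [enorm', sq_abs]

lemma spec_nonneg {a b : ℕ} (M : Matrix (Fin a) (Fin b) ℝ) : 0 ≤ spec M := by
  rw [spec_eq_norm]; exact norm_nonneg _

lemma spec_mul_le {a b c : ℕ} (A : Matrix (Fin a) (Fin b) ℝ) (B : Matrix (Fin b) (Fin c) ℝ) :
    spec (A * B) ≤ spec A * spec B := Matrix.l2_opNorm_mul A B

lemma spec_add_le {a b : ℕ} (A B : Matrix (Fin a) (Fin b) ℝ) :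
    spec (A + B) ≤ spec A + spec B := by
  rw [spec_eq_norm, spec_eq_norm, spec_eq_norm]; exact norm_add_le _ _

lemma spec_transpose {a b : ℕ} (M : Matrix (Fin a) (Fin b) ℝ) : spec Mᵀ = spec M := by
  rw [spec_eq_norm, spec_eq_norm, ← conjTranspose_eq_transpose_of_trivial,
    Matrix.l2_opNorm_conjTranspose]

lemma spec_neg {a b : ℕ} (M : Matrix (Fin a) (Fin b) ℝ) : spec (-M) = spec M := by
  rw [spec_eq_norm, spec_eq_norm, norm_neg]

lemma enorm_mulVec_le {a b : ℕ} (M : Matrix (Fin a) (Fin b) ℝ) (v : Fin b → ℝ) :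
    enorm' (M *ᵥ v) ≤ spec M * enorm' v := by
  rw [enorm_eq_norm, enorm_eq_norm, spec_eq_norm]
  exact Matrix.l2_opNorm_mulVec M ((WithLp.equiv 2 (Fin b → ℝ)).symm v)

lemma enorm_nonneg {a : ℕ} (v : Fin a → ℝ) : 0 ≤ enorm' v := Real.sqrt_nonneg _

lemma enorm'_add_le {a : ℕ} (v w : Fin a → ℝ) : enorm' (v + w) ≤ enorm' v + enorm' w := by
  rw [enorm_eq_norm, enorm_eq_norm, enorm_eq_norm]
  rw [show (WithLp.equiv 2 (Fin a → ℝ)).symm (v + w)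
      = (WithLp.equiv 2 (Fin a → ℝ)).symm v + (WithLp.equiv 2 (Fin a → ℝ)).symm w from rfl]
  exact norm_add_le _ _

lemma enorm'_neg {a : ℕ} (v : Fin a → ℝ) : enorm' (-v) = enorm' v := by
  rw [enorm_eq_norm, enorm_eq_norm]
  rw [show (WithLp.equiv 2 (Fin a → ℝ)).symm (-v) = -(WithLp.equiv 2 (Fin a → ℝ)).symm v from rfl]
  exact norm_neg _

lemma enorm'_sub_le {a : ℕ} (v w : Fin a → ℝ) : enorm' (v - w) ≤ enorm' v + enorm' w := by
  rw [sub_eq_add_neg]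
  exact le_trans (enorm'_add_le _ _) (by rw [enorm'_neg])

lemma spec_le_of_bound {a b : ℕ} {M : Matrix (Fin a) (Fin b) ℝ} {c : ℝ} (hc : 0 ≤ c)
    (h : ∀ v : Fin b → ℝ, enorm' (M *ᵥ v) ≤ c * enorm' v) : spec M ≤ c := by
  apply ContinuousLinearMap.opNorm_le_bound _ hc
  intro x
  have h1 : LinearMap.toContinuousLinearMap (Matrix.toEuclideanLin M) x
      = (WithLp.equiv 2 (Fin a → ℝ)).symm (M *ᵥ (WithLp.equiv 2 (Fin b → ℝ)) x) := rfl
  rw [h1, ← enorm_eq_norm]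
  have h2 : ‖x‖ = enorm' ((WithLp.equiv 2 (Fin b → ℝ)) x) := by
    rw [enorm_eq_norm]; rfl
  rw [h2]
  exact h _

lemma frob_nonneg {a b : ℕ} (M : Matrix (Fin a) (Fin b) ℝ) : 0 ≤ frob M := Real.sqrt_nonneg _

lemma spec_le_frob {a b : ℕ} (M : Matrix (Fin a) (Fin b) ℝ) : spec M ≤ frob M := by
  apply spec_le_of_bound (frob_nonneg M)
  intro v
  have key : ∑ i, ((M *ᵥ v) i) ^ 2 ≤ (∑ i, ∑ j, (M i j) ^ 2) * ∑ j, (v j) ^ 2 := by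
    rw [Finset.sum_mul]
    apply Finset.sum_le_sum
    intro i _
    exact Finset.sum_mul_sq_le_sq_mul_sq Finset.univ (fun j => M i j) v
  calc enorm' (M *ᵥ v) ≤ Real.sqrt ((∑ i, ∑ j, (M i j) ^ 2) * ∑ j, (v j) ^ 2) :=
        Real.sqrt_le_sqrt key
    _ = frob M * enorm' v := by
        rw [Real.sqrt_mul (by positivity)]; rfl

lemma dot_self_eq {a : ℕ} (v : Fin a → ℝ) : v ⬝ᵥ v = ∑ i, (v i) ^ 2 := by
  simp [dotProduct, sq]

lemma dot_self_nonneg' {a : ℕ} (v : Fin a → ℝ) : 0 ≤ v ⬝ᵥ v := by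
  rw [dot_self_eq]; positivity

lemma one_add_posDef {a b : ℕ} (B : Matrix (Fin a) (Fin b) ℝ) :
    ((1 : Matrix (Fin b) (Fin b) ℝ) + Bᵀ * B).PosDef := by
  apply Matrix.PosDef.add_posSemidef Matrix.PosDef.one
  have := Matrix.posSemidef_conjTranspose_mul_self B
  rwa [conjTranspose_eq_transpose_of_trivial] at this

lemma one_add_mul_inv {a b : ℕ} (B : Matrix (Fin a) (Fin b) ℝ) :
    ((1 : Matrix (Fin b) (Fin b) ℝ) + Bᵀ * B) * ((1 : Matrix (Fin b) (Fin b) ℝ) + Bᵀ * B)⁻¹ = 1 :=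
  Matrix.mul_nonsing_inv _ ((Matrix.isUnit_iff_isUnit_det _).1 (one_add_posDef B).isUnit)

lemma one_add_inv_mul {a b : ℕ} (B : Matrix (Fin a) (Fin b) ℝ) :
    ((1 : Matrix (Fin b) (Fin b) ℝ) + Bᵀ * B)⁻¹ * ((1 : Matrix (Fin b) (Fin b) ℝ) + Bᵀ * B) = 1 :=
  Matrix.nonsing_inv_mul _ ((Matrix.isUnit_iff_isUnit_det _).1 (one_add_posDef B).isUnit)

lemma spec_inv_one_add_le_one {a b : ℕ} (B : Matrix (Fin a) (Fin b) ℝ) :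
    spec ((1 : Matrix (Fin b) (Fin b) ℝ) + Bᵀ * B)⁻¹ ≤ 1 := by
  apply spec_le_of_bound zero_le_one
  intro v
  rw [one_mul]
  set M : Matrix (Fin b) (Fin b) ℝ := (1 + Bᵀ * B) with hM
  set y : Fin b → ℝ := M⁻¹ *ᵥ v with hy
  have hv : v = y + Bᵀ *ᵥ (B *ᵥ y) := by
    have h1 : M *ᵥ y = v := by
      rw [hy, Matrix.mulVec_mulVec, one_add_mul_inv B, Matrix.one_mulVec]
    have h4 : M *ᵥ y = y + Bᵀ *ᵥ (B *ᵥ y) := by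
      rw [hM, Matrix.add_mulVec, Matrix.one_mulVec, ← Matrix.mulVec_mulVec]
    rw [← h1, h4]
  apply Real.sqrt_le_sqrt
  have expand : ∑ i, (v i) ^ 2 = ∑ i, (y i) ^ 2 + (2 * ((B *ᵥ y) ⬝ᵥ (B *ᵥ y))
      + (Bᵀ *ᵥ (B *ᵥ y)) ⬝ᵥ (Bᵀ *ᵥ (B *ᵥ y))) := by
    rw [← dot_self_eq, ← dot_self_eq]
    rw [hv]
    rw [dotProduct_add, add_dotProduct, add_dotProduct]
    have h2 : y ⬝ᵥ (Bᵀ *ᵥ (B *ᵥ y)) = (B *ᵥ y) ⬝ᵥ (B *ᵥ y) := by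
      rw [Matrix.dotProduct_mulVec, Matrix.vecMul_transpose]
    have h3 : (Bᵀ *ᵥ (B *ᵥ y)) ⬝ᵥ y = (B *ᵥ y) ⬝ᵥ (B *ᵥ y) := by
      rw [dotProduct_comm, h2]
    rw [h2, h3]; ring
  rw [expand]
  have h5 := dot_self_nonneg' (B *ᵥ y)
  have h6 := dot_self_nonneg' (Bᵀ *ᵥ (B *ᵥ y))
  linarith

lemma one_add_mul_inv' {a b : ℕ} (B : Matrix (Fin a) (Fin b) ℝ) :
    ((1 : Matrix (Fin a) (Fin a) ℝ) + B * Bᵀ) * ((1 : Matrix (Fin a) (Fin a) ℝ) + B * Bᵀ)⁻¹ = 1 := by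
  have := one_add_mul_inv Bᵀ; rwa [transpose_transpose] at this

lemma one_add_inv_mul' {a b : ℕ} (B : Matrix (Fin a) (Fin b) ℝ) :
    ((1 : Matrix (Fin a) (Fin a) ℝ) + B * Bᵀ)⁻¹ * ((1 : Matrix (Fin a) (Fin a) ℝ) + B * Bᵀ) = 1 := by
  have := one_add_inv_mul Bᵀ; rwa [transpose_transpose] at this

lemma sandwich {n m : ℕ} (M : Matrix (Fin n) (Fin n) ℝ) (P : Matrix (Fin m) (Fin m) ℝ)
    (X : Matrix (Fin n) (Fin m) ℝ) (hM : M⁻¹ * M = 1) (hP : P * P⁻¹ = 1)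
    (h : M * X = X * P) : M⁻¹ * X = X * P⁻¹ :=
  calc M⁻¹ * X = M⁻¹ * X * 1 := (Matrix.mul_one _).symm
    _ = M⁻¹ * X * (P * P⁻¹) := by rw [hP]
    _ = M⁻¹ * (X * P) * P⁻¹ := by simp only [Matrix.mul_assoc]
    _ = M⁻¹ * (M * X) * P⁻¹ := by rw [h]
    _ = (M⁻¹ * M) * (X * P⁻¹) := by simp only [Matrix.mul_assoc]
    _ = X * P⁻¹ := by rw [hM, Matrix.one_mul]

lemma push1 {a b : ℕ} (B : Matrix (Fin a) (Fin b) ℝ) :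
    ((1 : Matrix (Fin b) (Fin b) ℝ) + Bᵀ * B)⁻¹ * Bᵀ
      = Bᵀ * ((1 : Matrix (Fin a) (Fin a) ℝ) + B * Bᵀ)⁻¹ :=
  sandwich _ _ _ (one_add_inv_mul B) (one_add_mul_inv' B)
    (by rw [Matrix.add_mul, Matrix.one_mul, Matrix.mul_add, Matrix.mul_one, Matrix.mul_assoc])

lemma push2 {a b : ℕ} (B : Matrix (Fin a) (Fin b) ℝ) :
    ((1 : Matrix (Fin a) (Fin a) ℝ) + B * Bᵀ)⁻¹ * B
      = B * ((1 : Matrix (Fin b) (Fin b) ℝ) + Bᵀ * B)⁻¹ :=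
  sandwich _ _ _ (one_add_inv_mul' B) (one_add_mul_inv B)
    (by rw [Matrix.add_mul, Matrix.one_mul, Matrix.mul_add, Matrix.mul_one, Matrix.mul_assoc])

lemma woodbury {a b : ℕ} (B : Matrix (Fin a) (Fin b) ℝ) :
    ((1 : Matrix (Fin b) (Fin b) ℝ) + Bᵀ * B)⁻¹
      = 1 - Bᵀ * ((1 : Matrix (Fin a) (Fin a) ℝ) + B * Bᵀ)⁻¹ * B := by
  apply Matrix.inv_eq_right_inv
  have h1 : ((1 : Matrix (Fin b) (Fin b) ℝ) + Bᵀ * B) *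
      (Bᵀ * ((1 : Matrix (Fin a) (Fin a) ℝ) + B * Bᵀ)⁻¹ * B) = Bᵀ * B := by
    rw [← push1]
    calc ((1 : Matrix (Fin b) (Fin b) ℝ) + Bᵀ * B) *
        (((1 : Matrix (Fin b) (Fin b) ℝ) + Bᵀ * B)⁻¹ * Bᵀ * B)
        = (((1 : Matrix (Fin b) (Fin b) ℝ) + Bᵀ * B) *
            ((1 : Matrix (Fin b) (Fin b) ℝ) + Bᵀ * B)⁻¹) * (Bᵀ * B) := by
          simp only [Matrix.mul_assoc]
      _ = Bᵀ * B := by rw [one_add_mul_inv, Matrix.one_mul]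
  rw [Matrix.mul_sub, Matrix.mul_one, h1, add_sub_cancel_right]

lemma inv_diff {n : ℕ} (M₁ M₂ F₁ F₂ : Matrix (Fin n) (Fin n) ℝ)
    (h1 : F₁ * M₁ = 1) (h2 : M₂ * F₂ = 1) :
    F₁ - F₂ = F₁ * ((M₂ - M₁) * F₂) := by
  rw [Matrix.sub_mul, h2, Matrix.mul_sub, Matrix.mul_one, ← Matrix.mul_assoc, h1,
    Matrix.one_mul]

lemma diff_identity {a b : ℕ} (B₁ B₂ : Matrix (Fin a) (Fin b) ℝ) :
    ((1 : Matrix (Fin b) (Fin b) ℝ) + B₁ᵀ * B₁)⁻¹ -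
      ((1 : Matrix (Fin b) (Fin b) ℝ) + B₂ᵀ * B₂)⁻¹
      = B₁ᵀ * ((1 : Matrix (Fin a) (Fin a) ℝ) + B₁ * B₁ᵀ)⁻¹ * (B₂ - B₁) *
          ((1 : Matrix (Fin b) (Fin b) ℝ) + B₂ᵀ * B₂)⁻¹
        + ((1 : Matrix (Fin b) (Fin b) ℝ) + B₁ᵀ * B₁)⁻¹ * (B₂ - B₁)ᵀ *
          (((1 : Matrix (Fin a) (Fin a) ℝ) + B₂ * B₂ᵀ)⁻¹ * B₂) := by
  have e1 : B₁ᵀ * ((1 : Matrix (Fin a) (Fin a) ℝ) + B₁ * B₁ᵀ)⁻¹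
      = ((1 : Matrix (Fin b) (Fin b) ℝ) + B₁ᵀ * B₁)⁻¹ * B₁ᵀ := (push1 B₁).symm
  rw [e1, push2 B₂]
  rw [inv_diff ((1 : Matrix (Fin b) (Fin b) ℝ) + B₁ᵀ * B₁)
    ((1 : Matrix (Fin b) (Fin b) ℝ) + B₂ᵀ * B₂)
    ((1 : Matrix (Fin b) (Fin b) ℝ) + B₁ᵀ * B₁)⁻¹
    ((1 : Matrix (Fin b) (Fin b) ℝ) + B₂ᵀ * B₂)⁻¹
    (one_add_inv_mul B₁) (one_add_mul_inv B₂)]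
  have h4 : ((1 : Matrix (Fin b) (Fin b) ℝ) + B₂ᵀ * B₂) - (1 + B₁ᵀ * B₁)
      = B₁ᵀ * (B₂ - B₁) + (B₂ - B₁)ᵀ * B₂ := by
    simp only [Matrix.transpose_sub, Matrix.mul_sub, Matrix.sub_mul]; abel
  rw [h4]
  simp only [Matrix.add_mul, Matrix.mul_add, Matrix.mul_assoc]

lemma post_form {d dobs s : ℕ} (L : Matrix (Fin d) (Fin s) ℝ)
    (G : Matrix (Fin dobs) (Fin d) ℝ) (S Sinv Γobs : Matrix (Fin dobs) (Fin dobs) ℝ)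
    (hS2 : S * S = Γobs) (hST : Sᵀ = S)
    (hSS' : S * Sinv = 1) (hS'S : Sinv * S = 1) :
    L * Lᵀ - (L * Lᵀ) * Gᵀ * (Γobs + G * (L * Lᵀ) * Gᵀ)⁻¹ * (G * (L * Lᵀ))
      = L * ((1 : Matrix (Fin s) (Fin s) ℝ) + (Sinv * G * L)ᵀ * (Sinv * G * L))⁻¹ * Lᵀ := by
  set B : Matrix (Fin dobs) (Fin s) ℝ := Sinv * G * L with hB
  have hGL : G * L = S * B := by
    rw [hB]; simp only [← Matrix.mul_assoc, hSS', Matrix.one_mul]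
  have c1 : ∀ {k : ℕ} (X : Matrix (Fin dobs) (Fin k) ℝ), S * (Sinv * X) = X := by
    intro k X; rw [← Matrix.mul_assoc, hSS', Matrix.one_mul]
  have c2 : ∀ {k : ℕ} (X : Matrix (Fin dobs) (Fin k) ℝ), Sinv * (S * X) = X := by
    intro k X; rw [← Matrix.mul_assoc, hS'S, Matrix.one_mul]
  have hmid : Γobs + G * (L * Lᵀ) * Gᵀ
      = S * ((1 : Matrix (Fin dobs) (Fin dobs) ℝ) + B * Bᵀ) * S := by
    have hGLG : G * (L * Lᵀ) * Gᵀ = (G * L) * (G * L)ᵀ := by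
      rw [Matrix.transpose_mul]; simp only [Matrix.mul_assoc]
    rw [hGLG, hGL, Matrix.transpose_mul, hST]
    rw [Matrix.mul_add, Matrix.mul_one, Matrix.add_mul, hS2]
    congr 1
    simp only [Matrix.mul_assoc]
  have hSinv : S⁻¹ = Sinv := Matrix.inv_eq_right_inv hSS'
  have hinv : (Γobs + G * (L * Lᵀ) * Gᵀ)⁻¹
      = Sinv * ((1 : Matrix (Fin dobs) (Fin dobs) ℝ) + B * Bᵀ)⁻¹ * Sinv := by
    rw [hmid, Matrix.mul_inv_rev, Matrix.mul_inv_rev, hSinv]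
    simp only [Matrix.mul_assoc]
  have h1 : (L * Lᵀ) * Gᵀ = L * (Bᵀ * S) := by
    rw [Matrix.mul_assoc, ← Matrix.transpose_mul, hGL, Matrix.transpose_mul, hST]
  have h2 : G * (L * Lᵀ) = (S * B) * Lᵀ := by rw [← Matrix.mul_assoc, hGL]
  have hterm : (L * Lᵀ) * Gᵀ * (Γobs + G * (L * Lᵀ) * Gᵀ)⁻¹ * (G * (L * Lᵀ))
      = L * (Bᵀ * ((1 : Matrix (Fin dobs) (Fin dobs) ℝ) + B * Bᵀ)⁻¹ * B) * Lᵀ := by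
    rw [h1, hinv, h2]
    simp only [Matrix.mul_assoc]
    rw [c2, c1]
  rw [hterm, woodbury B]
  rw [Matrix.mul_sub, Matrix.mul_one, Matrix.sub_mul]

end Aux

lemma cov_arith (l e g1 g2 b1 b2 : ℝ) (hl : 0 ≤ l) (he : 0 ≤ e)
    (hg1 : 0 ≤ g1) (hg2 : 0 ≤ g2) (hb1 : 0 ≤ b1) (hb2 : 0 ≤ b2) :
    l * (g1 * e) * l + l * (e * g2) * l ≤ l ^ 2 * (g1 + b2 * b1 * (b1 + b2) + g2) * e := by
  nlinarith [mul_nonneg (mul_nonneg (mul_nonneg hl hl) he)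
    (mul_nonneg (mul_nonneg hb2 hb1) (add_nonneg hb1 hb2))]

lemma final_arith (t X Y Z Cc s2 s3 w u z fE : ℝ)
    (ht : t ≤ X + Y + Z) (h1 : X ≤ (Cc * fE) * w) (h2 : Y ≤ (s2 * fE) * u)
    (h3 : Z ≤ (s3 * fE) * z) :
    t ≤ (Cc * w + s2 * u + s3 * z) * fE := by nlinarith

/-- Local Lipschitz bound for the posterior mean under perturbation of the forward
model, with the explicit constant `C′`. -/
theorem posterior_mean_perturbation_bound {d dobs s : ℕ}
    (L : Matrix (Fin d) (Fin s) ℝ) (Γpr : Matrix (Fin d) (Fin d) ℝ)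
    (hΓpr : L * Lᵀ = Γpr)
    (Γobs : Matrix (Fin dobs) (Fin dobs) ℝ) (hΓobs : Γobs.PosDef)
    (G Ghat : Matrix (Fin dobs) (Fin d) ℝ)
    (μpr : Fin d → ℝ) (hμpr : μpr ∈ Set.range L.mulVec)
    (m : Fin dobs → ℝ)
    -- Moore–Penrose pseudoinverse of `L`, characterized by the Penrose conditions
    (Ld : Matrix (Fin s) (Fin d) ℝ)
    (hLd1 : L * Ld * L = L) (hLd2 : Ld * L * Ld = Ld)
    (hLd3 : (L * Ld)ᵀ = L * Ld) (hLd4 : (Ld * L)ᵀ = Ld * L)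
    -- `Sinv = Γobs^{-1/2}`
    (Sinv : Matrix (Fin dobs) (Fin dobs) ℝ) (hSinv : Sinv = (psdSqrt hΓobs.posSemidef)⁻¹)
    -- posterior covariances and means
    (Γpos Γhatpos : Matrix (Fin d) (Fin d) ℝ)
    (hpos : Γpos = Γpr - Γpr * Gᵀ * (Γobs + G * Γpr * Gᵀ)⁻¹ * (G * Γpr))
    (hhatpos : Γhatpos = Γpr - Γpr * Ghatᵀ * (Γobs + Ghat * Γpr * Ghatᵀ)⁻¹ * (Ghat * Γpr))
    (μpos μhatpos : Fin d → ℝ)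
    (hμpos : μpos = μpr + (Γpos * Gᵀ * Γobs⁻¹) *ᵥ (m - G *ᵥ μpr))
    (hμhatpos : μhatpos = μpr + (Γhatpos * Ghatᵀ * Γobs⁻¹) *ᵥ (m - Ghat *ᵥ μpr))
    -- square roots of the prior-preconditioned Hessians and the Lipschitz constants
    (B₁ B₂ : Matrix (Fin dobs) (Fin s) ℝ)
    (hB₁ : B₁ = Sinv * G * L) (hB₂ : B₂ = Sinv * Ghat * L)
    (Cc : ℝ)
    (hCc : Cc = spec L ^ 2 *
      (spec (((1 : Matrix (Fin dobs) (Fin dobs) ℝ) + B₁ * B₁ᵀ)⁻¹ * B₁) +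
        spec B₂ * spec B₁ * (spec B₁ + spec B₂) +
        spec (((1 : Matrix (Fin dobs) (Fin dobs) ℝ) + B₂ * B₂ᵀ)⁻¹ * B₂)))
    (Cc' : ℝ)
    (hCc' : Cc' = Cc * enorm' ((Gᵀ * Γobs⁻¹) *ᵥ (m - G *ᵥ μpr)) +
      spec (Γhatpos * Gᵀ * Sinv) * enorm' (Ld *ᵥ μpr) +
      spec (Γhatpos * Ldᵀ) * enorm' (Sinv *ᵥ (m - Ghat *ᵥ μpr))) :
    enorm' (μpos - μhatpos) ≤ Cc' * frob (Sinv * (G - Ghat) * L) := by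
  obtain ⟨x, hx⟩ := hμpr
  set S : Matrix (Fin dobs) (Fin dobs) ℝ := psdSqrt hΓobs.posSemidef with hSdef
  have hS2 : S * S = Γobs := psdSqrt_mul_self hΓobs.posSemidef
  have hST : Sᵀ = S := by
    exact psdSqrt_transpose hΓobs.posSemidef
  have hdetS : IsUnit S.det := by
    have hdet : S.det * S.det = Γobs.det := by rw [← Matrix.det_mul, hS2]
    have hposdet := hΓobs.det_pos
    refine isUnit_iff_ne_zero.2 (fun h0 => ?_)
    rw [h0, mul_zero] at hdet
    exact absurd hdet.symm (ne_of_gt hposdet)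
  have hSS' : S * Sinv = 1 := by rw [hSinv]; exact Matrix.mul_nonsing_inv _ hdetS
  have hS'S : Sinv * S = 1 := by rw [hSinv]; exact Matrix.nonsing_inv_mul _ hdetS
  have hSinvT : Sinvᵀ = Sinv := by rw [hSinv, Matrix.transpose_nonsing_inv, hST]
  have hObsInv : Γobs⁻¹ = Sinv * Sinv := by
    rw [hSinv, ← hS2, Matrix.mul_inv_rev]
  have hpos' : Γpos = L * ((1 : Matrix (Fin s) (Fin s) ℝ) + B₁ᵀ * B₁)⁻¹ * Lᵀ := by
    rw [hpos, ← hΓpr, hB₁]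
    exact post_form L G S Sinv Γobs hS2 hST hSS' hS'S
  have hhatpos' : Γhatpos = L * ((1 : Matrix (Fin s) (Fin s) ℝ) + B₂ᵀ * B₂)⁻¹ * Lᵀ := by
    rw [hhatpos, ← hΓpr, hB₂]
    exact post_form L Ghat S Sinv Γobs hS2 hST hSS' hS'S
  set E : Matrix (Fin dobs) (Fin s) ℝ := Sinv * (G - Ghat) * L with hEdef
  have hE : B₁ - B₂ = E := by
    rw [hB₁, hB₂, hEdef, Matrix.mul_sub, Matrix.sub_mul]
  have hE2 : B₂ - B₁ = -E := by rw [← hE, neg_sub]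
  have hsE : spec (B₂ - B₁) = spec E := by rw [hE2, spec_neg]
  have hsEt : spec ((B₂ - B₁)ᵀ) = spec E := by rw [spec_transpose, hsE]
  have hEfrob : spec E ≤ frob E := spec_le_frob E
  have hCcnn : 0 ≤ Cc := by
    rw [hCc]
    refine mul_nonneg (pow_nonneg (spec_nonneg L) 2) (add_nonneg (add_nonneg (spec_nonneg _)
      (mul_nonneg (mul_nonneg (spec_nonneg _) (spec_nonneg _))
        (add_nonneg (spec_nonneg _) (spec_nonneg _)))) (spec_nonneg _))
  -- covariance difference bound
  have hcovdiff : Γpos - Γhatpos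
      = L * (B₁ᵀ * ((1 : Matrix (Fin dobs) (Fin dobs) ℝ) + B₁ * B₁ᵀ)⁻¹ * (B₂ - B₁) *
          ((1 : Matrix (Fin s) (Fin s) ℝ) + B₂ᵀ * B₂)⁻¹) * Lᵀ
        + L * (((1 : Matrix (Fin s) (Fin s) ℝ) + B₁ᵀ * B₁)⁻¹ * (B₂ - B₁)ᵀ *
          (((1 : Matrix (Fin dobs) (Fin dobs) ℝ) + B₂ * B₂ᵀ)⁻¹ * B₂)) * Lᵀ := by
    have step : L * ((1 : Matrix (Fin s) (Fin s) ℝ) + B₁ᵀ * B₁)⁻¹ * Lᵀ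
        - L * ((1 : Matrix (Fin s) (Fin s) ℝ) + B₂ᵀ * B₂)⁻¹ * Lᵀ
        = L * (((1 : Matrix (Fin s) (Fin s) ℝ) + B₁ᵀ * B₁)⁻¹
            - ((1 : Matrix (Fin s) (Fin s) ℝ) + B₂ᵀ * B₂)⁻¹) * Lᵀ := by
      rw [Matrix.mul_sub, Matrix.sub_mul]
    rw [hpos', hhatpos', step, diff_identity B₁ B₂, Matrix.mul_add, Matrix.add_mul]
  have hT₁ : spec (B₁ᵀ * ((1 : Matrix (Fin dobs) (Fin dobs) ℝ) + B₁ * B₁ᵀ)⁻¹ * (B₂ - B₁) *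
      ((1 : Matrix (Fin s) (Fin s) ℝ) + B₂ᵀ * B₂)⁻¹)
      ≤ spec (((1 : Matrix (Fin dobs) (Fin dobs) ℝ) + B₁ * B₁ᵀ)⁻¹ * B₁) * spec E := by
    have hG₁sym : (((1 : Matrix (Fin dobs) (Fin dobs) ℝ) + B₁ * B₁ᵀ)⁻¹)ᵀ
        = ((1 : Matrix (Fin dobs) (Fin dobs) ℝ) + B₁ * B₁ᵀ)⁻¹ := by
      rw [Matrix.transpose_nonsing_inv]
      congr 1
      rw [Matrix.transpose_add, Matrix.transpose_one, Matrix.transpose_mul, transpose_transpose]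
    have hsT : spec (B₁ᵀ * ((1 : Matrix (Fin dobs) (Fin dobs) ℝ) + B₁ * B₁ᵀ)⁻¹)
        = spec (((1 : Matrix (Fin dobs) (Fin dobs) ℝ) + B₁ * B₁ᵀ)⁻¹ * B₁) := by
      rw [← spec_transpose (((1 : Matrix (Fin dobs) (Fin dobs) ℝ) + B₁ * B₁ᵀ)⁻¹ * B₁),
        Matrix.transpose_mul, hG₁sym]
    calc spec (B₁ᵀ * ((1 : Matrix (Fin dobs) (Fin dobs) ℝ) + B₁ * B₁ᵀ)⁻¹ * (B₂ - B₁) *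
        ((1 : Matrix (Fin s) (Fin s) ℝ) + B₂ᵀ * B₂)⁻¹)
        ≤ spec (B₁ᵀ * ((1 : Matrix (Fin dobs) (Fin dobs) ℝ) + B₁ * B₁ᵀ)⁻¹ * (B₂ - B₁)) *
            spec (((1 : Matrix (Fin s) (Fin s) ℝ) + B₂ᵀ * B₂)⁻¹) := spec_mul_le _ _
      _ ≤ spec (B₁ᵀ * ((1 : Matrix (Fin dobs) (Fin dobs) ℝ) + B₁ * B₁ᵀ)⁻¹ * (B₂ - B₁)) * 1 :=
          mul_le_mul_of_nonneg_left (spec_inv_one_add_le_one B₂) (spec_nonneg _)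
      _ = spec (B₁ᵀ * ((1 : Matrix (Fin dobs) (Fin dobs) ℝ) + B₁ * B₁ᵀ)⁻¹ * (B₂ - B₁)) :=
          mul_one _
      _ ≤ spec (B₁ᵀ * ((1 : Matrix (Fin dobs) (Fin dobs) ℝ) + B₁ * B₁ᵀ)⁻¹) * spec (B₂ - B₁) :=
          spec_mul_le _ _
      _ = spec (((1 : Matrix (Fin dobs) (Fin dobs) ℝ) + B₁ * B₁ᵀ)⁻¹ * B₁) * spec E := by
          rw [hsT, hsE]
  have hT₂ : spec (((1 : Matrix (Fin s) (Fin s) ℝ) + B₁ᵀ * B₁)⁻¹ * (B₂ - B₁)ᵀ *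
      (((1 : Matrix (Fin dobs) (Fin dobs) ℝ) + B₂ * B₂ᵀ)⁻¹ * B₂))
      ≤ spec E * spec (((1 : Matrix (Fin dobs) (Fin dobs) ℝ) + B₂ * B₂ᵀ)⁻¹ * B₂) := by
    have hfst : spec (((1 : Matrix (Fin s) (Fin s) ℝ) + B₁ᵀ * B₁)⁻¹ * (B₂ - B₁)ᵀ) ≤ spec E := by
      calc spec (((1 : Matrix (Fin s) (Fin s) ℝ) + B₁ᵀ * B₁)⁻¹ * (B₂ - B₁)ᵀ)
          ≤ spec (((1 : Matrix (Fin s) (Fin s) ℝ) + B₁ᵀ * B₁)⁻¹) * spec ((B₂ - B₁)ᵀ) :=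
            spec_mul_le _ _
        _ ≤ 1 * spec ((B₂ - B₁)ᵀ) :=
            mul_le_mul_of_nonneg_right (spec_inv_one_add_le_one B₁) (spec_nonneg _)
        _ = spec E := by rw [one_mul, hsEt]
    calc spec (((1 : Matrix (Fin s) (Fin s) ℝ) + B₁ᵀ * B₁)⁻¹ * (B₂ - B₁)ᵀ *
        (((1 : Matrix (Fin dobs) (Fin dobs) ℝ) + B₂ * B₂ᵀ)⁻¹ * B₂))
        ≤ spec (((1 : Matrix (Fin s) (Fin s) ℝ) + B₁ᵀ * B₁)⁻¹ * (B₂ - B₁)ᵀ) *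
            spec (((1 : Matrix (Fin dobs) (Fin dobs) ℝ) + B₂ * B₂ᵀ)⁻¹ * B₂) := spec_mul_le _ _
      _ ≤ spec E * spec (((1 : Matrix (Fin dobs) (Fin dobs) ℝ) + B₂ * B₂ᵀ)⁻¹ * B₂) :=
          mul_le_mul_of_nonneg_right hfst (spec_nonneg _)
  have hcovb : spec (Γpos - Γhatpos) ≤ Cc * spec E := by
    rw [hcovdiff]
    refine le_trans (spec_add_le _ _) ?_
    have b1 : spec (L * (B₁ᵀ * ((1 : Matrix (Fin dobs) (Fin dobs) ℝ) + B₁ * B₁ᵀ)⁻¹ * (B₂ - B₁) *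
        ((1 : Matrix (Fin s) (Fin s) ℝ) + B₂ᵀ * B₂)⁻¹) * Lᵀ)
        ≤ spec L * (spec (((1 : Matrix (Fin dobs) (Fin dobs) ℝ) + B₁ * B₁ᵀ)⁻¹ * B₁) * spec E) *
            spec L := by
      calc spec (L * (B₁ᵀ * ((1 : Matrix (Fin dobs) (Fin dobs) ℝ) + B₁ * B₁ᵀ)⁻¹ * (B₂ - B₁) *
          ((1 : Matrix (Fin s) (Fin s) ℝ) + B₂ᵀ * B₂)⁻¹) * Lᵀ)
          ≤ spec (L * (B₁ᵀ * ((1 : Matrix (Fin dobs) (Fin dobs) ℝ) + B₁ * B₁ᵀ)⁻¹ * (B₂ - B₁) *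
              ((1 : Matrix (Fin s) (Fin s) ℝ) + B₂ᵀ * B₂)⁻¹)) * spec Lᵀ := spec_mul_le _ _
        _ ≤ spec L * spec (B₁ᵀ * ((1 : Matrix (Fin dobs) (Fin dobs) ℝ) + B₁ * B₁ᵀ)⁻¹ * (B₂ - B₁) *
              ((1 : Matrix (Fin s) (Fin s) ℝ) + B₂ᵀ * B₂)⁻¹) * spec Lᵀ :=
            mul_le_mul_of_nonneg_right (spec_mul_le _ _) (spec_nonneg _)
        _ = spec L * spec (B₁ᵀ * ((1 : Matrix (Fin dobs) (Fin dobs) ℝ) + B₁ * B₁ᵀ)⁻¹ * (B₂ - B₁) *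
              ((1 : Matrix (Fin s) (Fin s) ℝ) + B₂ᵀ * B₂)⁻¹) * spec L := by rw [spec_transpose]
        _ ≤ spec L * (spec (((1 : Matrix (Fin dobs) (Fin dobs) ℝ) + B₁ * B₁ᵀ)⁻¹ * B₁) * spec E) *
              spec L :=
            mul_le_mul_of_nonneg_right
              (mul_le_mul_of_nonneg_left hT₁ (spec_nonneg L)) (spec_nonneg L)
    have b2 : spec (L * (((1 : Matrix (Fin s) (Fin s) ℝ) + B₁ᵀ * B₁)⁻¹ * (B₂ - B₁)ᵀ *
        (((1 : Matrix (Fin dobs) (Fin dobs) ℝ) + B₂ * B₂ᵀ)⁻¹ * B₂)) * Lᵀ)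
        ≤ spec L * (spec E * spec (((1 : Matrix (Fin dobs) (Fin dobs) ℝ) + B₂ * B₂ᵀ)⁻¹ * B₂)) *
            spec L := by
      calc spec (L * (((1 : Matrix (Fin s) (Fin s) ℝ) + B₁ᵀ * B₁)⁻¹ * (B₂ - B₁)ᵀ *
          (((1 : Matrix (Fin dobs) (Fin dobs) ℝ) + B₂ * B₂ᵀ)⁻¹ * B₂)) * Lᵀ)
          ≤ spec (L * (((1 : Matrix (Fin s) (Fin s) ℝ) + B₁ᵀ * B₁)⁻¹ * (B₂ - B₁)ᵀ *
              (((1 : Matrix (Fin dobs) (Fin dobs) ℝ) + B₂ * B₂ᵀ)⁻¹ * B₂))) * spec Lᵀ :=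
            spec_mul_le _ _
        _ ≤ spec L * spec (((1 : Matrix (Fin s) (Fin s) ℝ) + B₁ᵀ * B₁)⁻¹ * (B₂ - B₁)ᵀ *
              (((1 : Matrix (Fin dobs) (Fin dobs) ℝ) + B₂ * B₂ᵀ)⁻¹ * B₂)) * spec Lᵀ :=
            mul_le_mul_of_nonneg_right (spec_mul_le _ _) (spec_nonneg _)
        _ = spec L * spec (((1 : Matrix (Fin s) (Fin s) ℝ) + B₁ᵀ * B₁)⁻¹ * (B₂ - B₁)ᵀ *
              (((1 : Matrix (Fin dobs) (Fin dobs) ℝ) + B₂ * B₂ᵀ)⁻¹ * B₂)) * spec L := by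
            rw [spec_transpose]
        _ ≤ spec L * (spec E * spec (((1 : Matrix (Fin dobs) (Fin dobs) ℝ) + B₂ * B₂ᵀ)⁻¹ * B₂)) *
              spec L :=
            mul_le_mul_of_nonneg_right
              (mul_le_mul_of_nonneg_left hT₂ (spec_nonneg L)) (spec_nonneg L)
    refine le_trans (add_le_add b1 b2) ?_
    rw [hCc]
    exact cov_arith _ _ _ _ _ _ (spec_nonneg L) (spec_nonneg E)
      (spec_nonneg _) (spec_nonneg _) (spec_nonneg B₁) (spec_nonneg B₂)
  -- mean decomposition
  have hLLd : (L * Ld) *ᵥ μpr = μpr := by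
    rw [← hx, Matrix.mulVec_mulVec, hLd1]
  have hLt : Lᵀ * (Ldᵀ * Lᵀ) = Lᵀ := by
    rw [← Matrix.mul_assoc, ← Matrix.transpose_mul, ← Matrix.transpose_mul,
      ← Matrix.mul_assoc, hLd1]
  have hProj : Γhatpos * Ldᵀ * Lᵀ = Γhatpos := by
    rw [hhatpos']
    simp only [Matrix.mul_assoc]
    rw [hLt]
  have hEu : E *ᵥ (Ld *ᵥ μpr) = (Sinv * (G - Ghat)) *ᵥ μpr := by
    rw [Matrix.mulVec_mulVec, hEdef, Matrix.mul_assoc (Sinv * (G - Ghat)) L Ld,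
      ← Matrix.mulVec_mulVec, hLLd]
  have hA : ((Γhatpos * Gᵀ * Sinv) * E) *ᵥ (Ld *ᵥ μpr)
      = (Γhatpos * (Gᵀ * (Γobs⁻¹ * (G - Ghat)))) *ᵥ μpr := by
    rw [← Matrix.mulVec_mulVec, hEu, Matrix.mulVec_mulVec]
    congr 1
    rw [hObsInv]
    simp only [Matrix.mul_assoc]
  have hCmat : (Γhatpos * Ldᵀ) * Eᵀ * Sinv = Γhatpos * ((G - Ghat)ᵀ * Γobs⁻¹) := by
    rw [hEdef, Matrix.transpose_mul, Matrix.transpose_mul, hSinvT, hObsInv]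
    conv_rhs => rw [← hProj]
    simp only [Matrix.mul_assoc]
  have hC : ((Γhatpos * Ldᵀ) * Eᵀ) *ᵥ (Sinv *ᵥ (m - Ghat *ᵥ μpr))
      = (Γhatpos * ((G - Ghat)ᵀ * Γobs⁻¹)) *ᵥ (m - Ghat *ᵥ μpr) := by
    rw [Matrix.mulVec_mulVec, hCmat]
  have hdec : μpos - μhatpos
      = (Γpos - Γhatpos) *ᵥ ((Gᵀ * Γobs⁻¹) *ᵥ (m - G *ᵥ μpr))
        - ((Γhatpos * Gᵀ * Sinv) * E) *ᵥ (Ld *ᵥ μpr)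
        + ((Γhatpos * Ldᵀ) * Eᵀ) *ᵥ (Sinv *ᵥ (m - Ghat *ᵥ μpr)) := by
    rw [hA, hC, hμpos, hμhatpos]
    simp only [Matrix.mulVec_sub, Matrix.sub_mulVec, Matrix.mulVec_add, Matrix.add_mulVec,
      Matrix.mulVec_mulVec, Matrix.transpose_sub, Matrix.mul_sub, Matrix.sub_mul,
      Matrix.mul_assoc]
    abel
  -- final estimates
  have htri : enorm' (μpos - μhatpos)
      ≤ enorm' ((Γpos - Γhatpos) *ᵥ ((Gᵀ * Γobs⁻¹) *ᵥ (m - G *ᵥ μpr)))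
        + enorm' (((Γhatpos * Gᵀ * Sinv) * E) *ᵥ (Ld *ᵥ μpr))
        + enorm' (((Γhatpos * Ldᵀ) * Eᵀ) *ᵥ (Sinv *ᵥ (m - Ghat *ᵥ μpr))) := by
    rw [hdec]
    refine le_trans (enorm'_add_le _ _) ?_
    have := enorm'_sub_le ((Γpos - Γhatpos) *ᵥ ((Gᵀ * Γobs⁻¹) *ᵥ (m - G *ᵥ μpr)))
      (((Γhatpos * Gᵀ * Sinv) * E) *ᵥ (Ld *ᵥ μpr))
    linarith
  have e1 : enorm' ((Γpos - Γhatpos) *ᵥ ((Gᵀ * Γobs⁻¹) *ᵥ (m - G *ᵥ μpr)))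
      ≤ (Cc * frob E) * enorm' ((Gᵀ * Γobs⁻¹) *ᵥ (m - G *ᵥ μpr)) := by
    calc enorm' ((Γpos - Γhatpos) *ᵥ ((Gᵀ * Γobs⁻¹) *ᵥ (m - G *ᵥ μpr)))
        ≤ spec (Γpos - Γhatpos) * enorm' ((Gᵀ * Γobs⁻¹) *ᵥ (m - G *ᵥ μpr)) :=
          enorm_mulVec_le _ _
      _ ≤ (Cc * spec E) * enorm' ((Gᵀ * Γobs⁻¹) *ᵥ (m - G *ᵥ μpr)) :=
          mul_le_mul_of_nonneg_right hcovb (enorm_nonneg _)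
      _ ≤ (Cc * frob E) * enorm' ((Gᵀ * Γobs⁻¹) *ᵥ (m - G *ᵥ μpr)) :=
          mul_le_mul_of_nonneg_right (mul_le_mul_of_nonneg_left hEfrob hCcnn) (enorm_nonneg _)
  have e2 : enorm' (((Γhatpos * Gᵀ * Sinv) * E) *ᵥ (Ld *ᵥ μpr))
      ≤ (spec (Γhatpos * Gᵀ * Sinv) * frob E) * enorm' (Ld *ᵥ μpr) := by
    calc enorm' (((Γhatpos * Gᵀ * Sinv) * E) *ᵥ (Ld *ᵥ μpr))
        ≤ spec ((Γhatpos * Gᵀ * Sinv) * E) * enorm' (Ld *ᵥ μpr) := enorm_mulVec_le _ _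
      _ ≤ (spec (Γhatpos * Gᵀ * Sinv) * spec E) * enorm' (Ld *ᵥ μpr) :=
          mul_le_mul_of_nonneg_right (spec_mul_le _ _) (enorm_nonneg _)
      _ ≤ (spec (Γhatpos * Gᵀ * Sinv) * frob E) * enorm' (Ld *ᵥ μpr) :=
          mul_le_mul_of_nonneg_right
            (mul_le_mul_of_nonneg_left hEfrob (spec_nonneg _)) (enorm_nonneg _)
  have e3 : enorm' (((Γhatpos * Ldᵀ) * Eᵀ) *ᵥ (Sinv *ᵥ (m - Ghat *ᵥ μpr)))
      ≤ (spec (Γhatpos * Ldᵀ) * frob E) * enorm' (Sinv *ᵥ (m - Ghat *ᵥ μpr)) := by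
    calc enorm' (((Γhatpos * Ldᵀ) * Eᵀ) *ᵥ (Sinv *ᵥ (m - Ghat *ᵥ μpr)))
        ≤ spec ((Γhatpos * Ldᵀ) * Eᵀ) * enorm' (Sinv *ᵥ (m - Ghat *ᵥ μpr)) := enorm_mulVec_le _ _
      _ ≤ (spec (Γhatpos * Ldᵀ) * spec Eᵀ) * enorm' (Sinv *ᵥ (m - Ghat *ᵥ μpr)) :=
          mul_le_mul_of_nonneg_right (spec_mul_le _ _) (enorm_nonneg _)
      _ = (spec (Γhatpos * Ldᵀ) * spec E) * enorm' (Sinv *ᵥ (m - Ghat *ᵥ μpr)) := by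
          rw [spec_transpose]
      _ ≤ (spec (Γhatpos * Ldᵀ) * frob E) * enorm' (Sinv *ᵥ (m - Ghat *ᵥ μpr)) :=
          mul_le_mul_of_nonneg_right
            (mul_le_mul_of_nonneg_left hEfrob (spec_nonneg _)) (enorm_nonneg _)
  rw [hCc']
  exact final_arith _ _ _ _ _ _ _ _ _ _ _ htri e1 e2 e3
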